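/- The function ξ is strictly increasing on (1,∞) and lim_{t→∞} ξ(t) = 1. -/

import Mathlib

open MeasureTheory Filter Set

namespace XiAux

/-- The basic hyperbolic inequality `3y < tanh y + 2 sinh y` for `y > 0`. -/
lemma tanh_key {y : ℝ} (hy : 0 < y) : 3 * y < Real.tanh y + 2 * Real.sinh y := by
  have hg : ∀ s : ℝ, HasDerivAt
      (fun s => Real.sinh s / Real.cosh s + 2 * Real.sinh s - 3 * s)
      (1 / Real.cosh s ^ 2 + 2 * Real.cosh s - 3) s := by
    intro s
    have h1 := (Real.hasDerivAt_sinh s).div (Real.hasDerivAt_cosh s) (Real.cosh_pos s).ne'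
    have h2 := (Real.hasDerivAt_sinh s).const_mul (2:ℝ)
    have h3 : HasDerivAt (fun y : ℝ => 3 * y) 3 s := by
      simpa using (hasDerivAt_id s).const_mul (3:ℝ)
    have h4 := (h1.add h2).sub h3
    refine h4.congr_deriv ?_
    have hc := Real.cosh_sq_sub_sinh_sq s
    have hc0 : (Real.cosh s)^2 ≠ 0 := by positivity
    field_simp
    nlinarith [hc]
  have hmono : StrictMonoOn
      (fun s => Real.sinh s / Real.cosh s + 2 * Real.sinh s - 3 * s) (Set.Ici 0) := by
    apply strictMonoOn_of_deriv_pos (convex_Ici 0)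
    · exact fun s _ => (hg s).continuousAt.continuousWithinAt
    · intro s hs
      rw [interior_Ici] at hs
      rw [(hg s).deriv]
      have hc : 1 < Real.cosh s := Real.one_lt_cosh.2 (ne_of_gt hs)
      have hc0 : (0:ℝ) < Real.cosh s := Real.cosh_pos s
      have key : 1 / Real.cosh s ^ 2 + 2 * Real.cosh s - 3
          = (Real.cosh s - 1)^2 * (2 * Real.cosh s + 1) / Real.cosh s ^ 2 := by
        field_simp
        ring
      rw [key]
      simp only [Set.mem_Ioi] at hs
      exact div_pos (mul_pos (pow_pos (by linarith) 2) (by linarith)) (by positivity)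
  have h0 : (0:ℝ) ∈ Set.Ici (0:ℝ) := Set.self_mem_Ici
  have hy' : y ∈ Set.Ici (0:ℝ) := le_of_lt hy
  have := hmono h0 hy' hy
  simp only [Real.sinh_zero, Real.cosh_zero] at this
  rw [Real.tanh_eq_sinh_div_cosh]
  norm_num at this
  linarith

/-- Key exponential inequality: for `x > 0`,
`x e^x - e^x + 1 < e^{x/3} (e^x - 1 - x)`. -/
lemma exp_key {x : ℝ} (hx : 0 < x) :
    x * Real.exp x - Real.exp x + 1 < Real.exp (x/3) * (Real.exp x - 1 - x) := by
  have hy : 0 < x / 3 := by linarith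
  have h := tanh_key hy
  rw [Real.tanh_eq_sinh_div_cosh] at h
  have h' : 3 * (x/3) - 2 * Real.sinh (x/3) < Real.sinh (x/3) / Real.cosh (x/3) := by
    linarith
  have hkey := (lt_div_iff₀ (Real.cosh_pos (x/3))).1 h'
  rw [Real.sinh_eq, Real.cosh_eq, Real.exp_neg] at hkey
  set E := Real.exp (x/3) with hEdef
  have hEpos : 0 < E := Real.exp_pos _
  have hne : E ≠ 0 := ne_of_gt hEpos
  have hcube : Real.exp x = E^3 := by
    rw [hEdef, ← Real.exp_nat_mul]
    norm_num
    ring_nf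
  rw [hcube]
  have hkey2 : (x*E - E^2 + 1) * (E^2 + 1) < E^3 - E := by
    have h2 : (0:ℝ) < 2 * E^2 := by positivity
    have h3 := mul_lt_mul_of_pos_right hkey h2
    calc (x*E - E^2 + 1) * (E^2 + 1)
        = (3 * (x / 3) - 2 * ((E - E⁻¹) / 2)) * ((E + E⁻¹) / 2) * (2 * E^2) := by
          field_simp; ring
      _ < (E - E⁻¹) / 2 * (2 * E^2) := h3
      _ = E^3 - E := by field_simp
  nlinarith [hkey2]

lemma P_pos {x : ℝ} (hx : 0 < x) : 0 < Real.exp x - 1 - x := by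
  have := Real.add_one_lt_exp (ne_of_gt hx)
  linarith

lemma Q_pos {x : ℝ} (hx : 0 < x) : 0 < x * Real.exp x - Real.exp x + 1 := by
  have h := Real.add_one_lt_exp (neg_ne_zero.2 (ne_of_gt hx))
  have h2 : Real.exp (-x) * Real.exp x = 1 := by
    rw [← Real.exp_add]; simp
  nlinarith [Real.exp_pos x]

/-- The explicit function `Φ` with `ξ t = Φ (v t - u t)`. -/
noncomputable def Phi (x : ℝ) : ℝ :=
  (Real.exp x - 1) / (Real.exp x - 1 - x)
    - (Real.exp x - 1) / (x * Real.exp x - Real.exp x + 1)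

lemma Phi_hasDeriv {x : ℝ} (hx : 0 < x) :
    HasDerivAt Phi
      (Real.exp x * (Real.exp x - 1 - x) / (x * Real.exp x - Real.exp x + 1)^2
        - (x * Real.exp x - Real.exp x + 1) / (Real.exp x - 1 - x)^2) x := by
  have hP := P_pos hx
  have hQ := Q_pos hx
  have hnum : HasDerivAt (fun x => Real.exp x - 1) (Real.exp x) x :=
    (Real.hasDerivAt_exp x).sub_const 1
  have hPd : HasDerivAt (fun x => Real.exp x - 1 - x) (Real.exp x - 1) x := by
    exact hnum.sub (hasDerivAt_id x)
  have hQd : HasDerivAt (fun x => x * Real.exp x - Real.exp x + 1) (x * Real.exp x) x := by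
    have h1 := (hasDerivAt_id x).mul (Real.hasDerivAt_exp x)
    have h2 := (h1.sub (Real.hasDerivAt_exp x)).add_const 1
    have hval : 1 * Real.exp x + id x * Real.exp x - Real.exp x = x * Real.exp x := by
      simp only [id_eq, one_mul]; ring
    exact hval ▸ h2
  have hA := hnum.div hPd (ne_of_gt hP)
  have hB := hnum.div hQd (ne_of_gt hQ)
  have hAB := hA.sub hB
  refine hAB.congr_deriv ?_
  have hP2 := pow_ne_zero 2 (ne_of_gt hP)
  have hQ2 := pow_ne_zero 2 (ne_of_gt hQ)
  rw [div_sub_div _ _ hP2 hQ2, div_sub_div _ _ hQ2 hP2, div_eq_div_iff (mul_ne_zero hP2 hQ2) (mul_ne_zero hQ2 hP2)]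
  ring

lemma Phi_strictMono : StrictMonoOn Phi (Set.Ioi 0) := by
  apply strictMonoOn_of_deriv_pos (convex_Ioi 0)
  · exact fun s hs => (Phi_hasDeriv hs).continuousAt.continuousWithinAt
  · intro x hx
    rw [interior_Ioi] at hx
    rw [(Phi_hasDeriv hx).deriv]
    have hP := P_pos hx
    have hQ := Q_pos hx
    have hk := exp_key hx
    simp only [Set.mem_Ioi] at hx
    have hcube : Real.exp (x/3)^3 = Real.exp x := by
      rw [← Real.exp_nat_mul]; norm_num; ring_nf
    have hQ3 : (x * Real.exp x - Real.exp x + 1)^3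
        < Real.exp x * (Real.exp x - 1 - x)^3 := by
      have := pow_lt_pow_left₀ hk (le_of_lt hQ) (by norm_num : (3:ℕ) ≠ 0)
      calc (x * Real.exp x - Real.exp x + 1)^3
          < (Real.exp (x/3) * (Real.exp x - 1 - x))^3 := this
        _ = Real.exp (x/3)^3 * (Real.exp x - 1 - x)^3 := by ring
        _ = Real.exp x * (Real.exp x - 1 - x)^3 := by rw [hcube]
    have h1 : (x * Real.exp x - Real.exp x + 1) / (Real.exp x - 1 - x)^2
        < Real.exp x * (Real.exp x - 1 - x) / (x * Real.exp x - Real.exp x + 1)^2 := by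
      rw [div_lt_div_iff₀ (by positivity) (by positivity)]
      nlinarith [hQ3]
    linarith

/-- `f s = exp(-s) + s` has derivative `1 - exp (-s)`. -/
lemma f_hasDeriv (s : ℝ) :
    HasDerivAt (fun s : ℝ => Real.exp (-s) + s) (1 - Real.exp (-s)) s := by
  have h1 : HasDerivAt (fun s : ℝ => Real.exp (-s)) (-Real.exp (-s)) s := by
    have := (Real.hasDerivAt_exp (-s)).comp s ((hasDerivAt_id s).neg)
    refine this.congr_deriv ?_
    ring
  have := h1.add (hasDerivAt_id s)
  refine this.congr_deriv ?_
  ring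

lemma f_strictMonoOn :
    StrictMonoOn (fun s : ℝ => Real.exp (-s) + s) (Set.Ici 0) := by
  apply strictMonoOn_of_deriv_pos (convex_Ici 0)
  · exact fun s _ => (f_hasDeriv s).continuousAt.continuousWithinAt
  · intro s hs
    rw [interior_Ici] at hs
    simp only [Set.mem_Ioi] at hs
    rw [(f_hasDeriv s).deriv]
    have : Real.exp (-s) < 1 := by
      rw [← Real.exp_zero]
      exact Real.exp_lt_exp.2 (by linarith)
    linarith

lemma f_strictAntiOn :
    StrictAntiOn (fun s : ℝ => Real.exp (-s) + s) (Set.Iic 0) := by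
  apply strictAntiOn_of_deriv_neg (convex_Iic 0)
  · exact fun s _ => (f_hasDeriv s).continuousAt.continuousWithinAt
  · intro s hs
    rw [interior_Iic] at hs
    simp only [Set.mem_Iio] at hs
    rw [(f_hasDeriv s).deriv]
    have : 1 < Real.exp (-s) := by
      rw [← Real.exp_zero]
      exact Real.exp_lt_exp.2 (by linarith)
    linarith

end XiAux

/-- The function `ξ` is strictly increasing on `(1,∞)` and
`lim_{t→∞} ξ(t) = 1`.  Here `u t ≤ 0 ≤ v t` are the two solutions of `e^{-s} + s = t`
for `t ≥ 1`, and `ξ(t) = 1/(1 − e^{-v t}) + 1/(1 − e^{-u t})` for `t > 1`. -/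
theorem xi_strictMono_and_limit (u v ξ : ℝ → ℝ)
    (hu : ∀ t ≥ (1:ℝ), u t ≤ 0 ∧ Real.exp (-(u t)) + u t = t)
    (hv : ∀ t ≥ (1:ℝ), 0 ≤ v t ∧ Real.exp (-(v t)) + v t = t)
    (hξ : ∀ t > (1:ℝ),
      ξ t = 1/(1 - Real.exp (-(v t))) + 1/(1 - Real.exp (-(u t)))) :
    StrictMonoOn ξ (Set.Ioi 1) ∧ Tendsto ξ atTop (nhds 1) := by
  -- positivity / negativity of v, u on (1, ∞)
  have hvpos : ∀ t > (1:ℝ), 0 < v t := by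
    intro t ht
    obtain ⟨h0, heq⟩ := hv t ht.le
    rcases h0.lt_or_eq with h | h
    · exact h
    · exfalso
      rw [← h] at heq
      simp at heq
      linarith
  have huneg : ∀ t > (1:ℝ), u t < 0 := by
    intro t ht
    obtain ⟨h0, heq⟩ := hu t ht.le
    rcases h0.lt_or_eq with h | h
    · exact h
    · exfalso
      rw [h] at heq
      simp at heq
      linarith
  -- the identity ξ t = Phi (v t - u t)
  have hxi_eq : ∀ t > (1:ℝ), ξ t = XiAux.Phi (v t - u t) := by
    intro t ht
    obtain ⟨hu0, hueq⟩ := hu t ht.le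
    obtain ⟨hv0, hveq⟩ := hv t ht.le
    have hvp := hvpos t ht
    have hun := huneg t ht
    set X := v t - u t with hXdef
    have hXpos : 0 < X := by simp only [hXdef]; linarith
    set E := Real.exp X with hEdef
    have hE1 : 1 < E := by
      rw [hEdef, ← Real.exp_zero]
      exact Real.exp_lt_exp.2 hXpos
    have hb : Real.exp (-(u t)) = Real.exp (-(v t)) * E := by
      rw [hEdef, ← Real.exp_add]
      congr 1
      simp only [hXdef]
      ring
    have hsub : Real.exp (-(u t)) - Real.exp (-(v t)) = X := by
      simp only [hXdef]
      linarith
    have ha : Real.exp (-(v t)) = X / (E - 1) := by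
      rw [eq_div_iff (by linarith : E - 1 ≠ 0)]
      rw [hb] at hsub
      linarith [hsub]
    have hbv : Real.exp (-(u t)) = X * E / (E - 1) := by
      rw [hb, ha]
      ring
    have hP := XiAux.P_pos hXpos
    have hQ := XiAux.Q_pos hXpos
    rw [hξ t ht, ha, hbv, XiAux.Phi]
    rw [← hEdef]
    have hEne : E - 1 ≠ 0 := by linarith
    have hPne : E - 1 - X ≠ 0 := by rw [hEdef]; exact ne_of_gt hP
    have hQne : X * E - E + 1 ≠ 0 := by rw [hEdef]; exact ne_of_gt hQ
    have e1 : 1 - X / (E - 1) = (E - 1 - X) / (E - 1) := by field_simp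
    have e2 : 1 - X * E / (E - 1) = -((X * E - E + 1) / (E - 1)) := by
      field_simp
      ring
    rw [e1, e2, one_div_div, div_neg, one_div_div]
    ring
  -- strict monotonicity of x t = v t - u t on (1, ∞)
  have hxmono : ∀ s ∈ Set.Ioi (1:ℝ), ∀ t ∈ Set.Ioi (1:ℝ), s < t →
      v s - u s < v t - u t := by
    intro s hs t ht hst
    simp only [Set.mem_Ioi] at hs ht
    obtain ⟨hus0, huseq⟩ := hu s hs.le
    obtain ⟨hut0, huteq⟩ := hu t ht.le
    obtain ⟨hvs0, hvseq⟩ := hv s hs.le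
    obtain ⟨hvt0, hvteq⟩ := hv t ht.le
    have h1 : v s < v t := by
      have := (XiAux.f_strictMonoOn.lt_iff_lt (Set.mem_Ici.2 hvs0)
        (Set.mem_Ici.2 hvt0)).1
      apply this
      show Real.exp (-(v s)) + v s < Real.exp (-(v t)) + v t
      rw [hvseq, hvteq]
      exact hst
    have h2 : u t < u s := by
      have := (XiAux.f_strictAntiOn.lt_iff_gt (Set.mem_Iic.2 hus0)
        (Set.mem_Iic.2 hut0)).1
      apply this
      show Real.exp (-(u s)) + u s < Real.exp (-(u t)) + u t
      rw [huseq, huteq]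
      exact hst
    linarith
  constructor
  · -- strict monotonicity
    intro s hs t ht hst
    rw [hxi_eq s hs, hxi_eq t ht]
    have hs' : (1:ℝ) < s := hs
    have ht' : (1:ℝ) < t := ht
    have hxs : 0 < v s - u s := by
      have := hvpos s hs'
      have := huneg s hs'
      linarith
    have hxt : 0 < v t - u t := by
      have := hvpos t ht'
      have := huneg t ht'
      linarith
    exact XiAux.Phi_strictMono (Set.mem_Ioi.2 hxs) (Set.mem_Ioi.2 hxt)
      (hxmono s hs t ht hst)
  · -- the limit
    have ha : Tendsto (fun t => Real.exp (-(v t))) atTop (nhds 0) := by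
      apply tendsto_of_tendsto_of_tendsto_of_le_of_le'
        (tendsto_const_nhds : Tendsto (fun _ : ℝ => (0:ℝ)) atTop (nhds 0))
        (Real.tendsto_exp_atBot.comp
          (tendsto_atBot_add_const_right atTop (1:ℝ) tendsto_neg_atTop_atBot))
      · exact Eventually.of_forall fun t => (Real.exp_pos _).le
      · filter_upwards [eventually_ge_atTop (1:ℝ)] with t ht
        obtain ⟨h0, heq⟩ := hv t ht
        have hvt : t - 1 ≤ v t := by
          have : Real.exp (-(v t)) ≤ 1 := Real.exp_le_one_iff.2 (by linarith)
          linarith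
        have : -(v t) ≤ -t + 1 := by linarith
        calc Real.exp (-(v t)) ≤ Real.exp (-t + 1) := Real.exp_le_exp.2 this
          _ = Real.exp (-t + 1) := rfl
    have h1 : Tendsto (fun t => 1/(1 - Real.exp (-(v t)))) atTop (nhds 1) := by
      have hden : Tendsto (fun t => 1 - Real.exp (-(v t))) atTop (nhds 1) := by
        have h := (tendsto_const_nhds : Tendsto (fun _ : ℝ => (1:ℝ)) atTop (nhds 1)).sub ha
        simpa using h
      have := hden.inv₀ (by norm_num : (1:ℝ) ≠ 0)
      simpa [one_div] using this
    have h2 : Tendsto (fun t => 1/(1 - Real.exp (-(u t)))) atTop (nhds 0) := by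
      apply tendsto_of_tendsto_of_tendsto_of_le_of_le'
        (show Tendsto (fun t : ℝ => 1/(1 - t)) atTop (nhds 0) by
          have hb : Tendsto (fun t : ℝ => t - 1) atTop atTop := by
            simpa [sub_eq_add_neg] using
              tendsto_atTop_add_const_right atTop (-1 : ℝ) tendsto_id
          have h0 := hb.inv_tendsto_atTop
          have h1 : Tendsto (fun t : ℝ => -((t - 1)⁻¹)) atTop (nhds 0) := by
            simpa using h0.neg
          apply h1.congr
          intro t
          rw [one_div, ← inv_neg]
          ring_nf)
        (tendsto_const_nhds : Tendsto (fun _ : ℝ => (0:ℝ)) atTop (nhds 0))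
      · filter_upwards [eventually_gt_atTop (1:ℝ)] with t ht
        obtain ⟨h0, heq⟩ := hu t ht.le
        have hbt : t ≤ Real.exp (-(u t)) := by linarith
        have hc : 1 - Real.exp (-(u t)) ≤ 1 - t := by linarith
        have hd : 1 - t < 0 := by linarith
        exact one_div_le_one_div_of_neg_of_le hd hc
      · filter_upwards [eventually_gt_atTop (1:ℝ)] with t ht
        obtain ⟨h0, heq⟩ := hu t ht.le
        have hbt : t ≤ Real.exp (-(u t)) := by linarith
        have hc : 1 - Real.exp (-(u t)) < 0 := by linarith
        exact le_of_lt (div_neg_of_pos_of_neg one_pos hc)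
    have hsum := h1.add h2
    rw [add_zero] at hsum
    apply hsum.congr'
    filter_upwards [eventually_gt_atTop (1:ℝ)] with t ht
    exact (hξ t ht).symm
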